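/- Let P be a 2-torsion free prime unital ring with a nontrivial idempotent e₁, set e₂ = 1 − e₁, and let D : P → P be a commuting Jordan left centralizer such that e₁ D(m) e₂ = 0 for all m ∈ e₁Pe₂. Then D(a) = 0 for every a ∈ e₁Pe₁. -/
import Mathlib


/-- Lemma 3.2: D(a) = 0 for all a ∈ e₁Pe₁. -/
theorem commuting_jordan_left_centralizer_eleven {P : Type*} [Ring P]
    (htf : ∀ p : P, 2 • p = 0 → p = 0)
    (hprime : ∀ a b : P, (∀ x : P, a * x * b = 0) → a = 0 ∨ b = 0)
    (e₁ : P) (he : e₁ * e₁ = e₁) (he0 : e₁ ≠ 0) (he1 : e₁ ≠ 1)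
    (D : P → P)
    (hadd : ∀ x y : P, D (x + y) = D x + D y)
    (hJ : ∀ p : P, D (p ^ 2) = D p * p)
    (hC : ∀ p : P, D p * p = p * D p)
    (h12 : ∀ m : P, (∃ x : P, m = e₁ * x * (1 - e₁)) → e₁ * D m * (1 - e₁) = 0) :
    ∀ a : P, (∃ x : P, a = e₁ * x * e₁) → D a = 0 := by
  rintro a ⟨x₀, ha⟩
  obtain ⟨e₂, hE⟩ : ∃ e₂ : P, e₂ = 1 - e₁ := ⟨_, rfl⟩
  rw [show (1 : P) - e₁ = e₂ from hE.symm] at h12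
  -- basic idempotent facts
  have h12e : e₁ * e₂ = 0 := by rw [hE, mul_sub, mul_one, he, sub_self]
  have h21e : e₂ * e₁ = 0 := by rw [hE, sub_mul, one_mul, he, sub_self]
  have h22e : e₂ * e₂ = e₂ := by
    rw [hE, mul_sub, mul_one, sub_mul, one_mul, he, sub_self, sub_zero]
  have he2ne : e₂ ≠ 0 := by
    intro h
    have h0 : (1 : P) - e₁ = 0 := by rw [← hE, h]
    exact he1 (sub_eq_zero.mp h0).symm
  have hae1 : a * e₁ = a := by rw [ha, mul_assoc, mul_assoc, he, ← mul_assoc]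
  have he1a : e₁ * a = a := by rw [ha, ← mul_assoc, ← mul_assoc, he]
  have hae2 : a * e₂ = 0 := by rw [← hae1, mul_assoc, h12e, mul_zero]
  have he2a : e₂ * a = 0 := by rw [← he1a, ← mul_assoc, h21e, zero_mul]
  -- associativity-friendly versions
  have h11z : ∀ z : P, e₁ * (e₁ * z) = e₁ * z := fun z => by rw [← mul_assoc, he]
  have h12z : ∀ z : P, e₁ * (e₂ * z) = 0 := fun z => by rw [← mul_assoc, h12e, zero_mul]
  have h21z : ∀ z : P, e₂ * (e₁ * z) = 0 := fun z => by rw [← mul_assoc, h21e, zero_mul]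
  have h22z : ∀ z : P, e₂ * (e₂ * z) = e₂ * z := fun z => by rw [← mul_assoc, h22e]
  have he1az : ∀ z : P, e₁ * (a * z) = a * z := fun z => by rw [← mul_assoc, he1a]
  have he2az : ∀ z : P, e₂ * (a * z) = 0 := fun z => by rw [← mul_assoc, he2a, zero_mul]
  have ha1z : ∀ z : P, a * (e₁ * z) = a * z := fun z => by rw [← mul_assoc, hae1]
  have ha2z : ∀ z : P, a * (e₂ * z) = 0 := fun z => by rw [← mul_assoc, hae2, zero_mul]
  -- linearized commuting identity
  have hlin : ∀ p q : P, D p * q + D q * p = p * D q + q * D p := by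
    intro p q
    have h1 := hC (p + q)
    simp only [hadd] at h1
    have key : D p * q + D q * p = (D p + D q) * (p + q) - D p * p - D q * q := by
      noncomm_ring
    rw [key, h1, hC p, hC q]
    noncomm_ring
  -- linearized Jordan identity
  have hlin' : ∀ p q : P, D (p * q + q * p) = D p * q + D q * p := by
    intro p q
    have h1 := hJ (p + q)
    have hsq : (p + q) ^ 2 = p ^ 2 + (p * q + q * p) + q ^ 2 := by noncomm_ring
    rw [hsq] at h1
    simp only [hadd, hJ p, hJ q] at h1
    rw [hadd]
    have h2 : D (p * q) + D (q * p) = (D p + D q) * (p + q) - D p * p - D q * q := by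
      rw [← h1]; abel
    rw [h2]; noncomm_ring
  -- Step 1 : e₁ * D a * e₁ = 0
  have step1 : e₁ * D a * e₁ = 0 := by
    have key : ∀ x : P, (e₁ * D a * e₁) * x * e₂ = 0 := by
      intro x
      have hma : (e₁ * x * e₂) * a = 0 := by
        simp only [mul_assoc, he2a, mul_zero]
      have hDam : D (a * (e₁ * x * e₂)) = D a * (e₁ * x * e₂) + D (e₁ * x * e₂) * a := by
        have h0 := hlin' a (e₁ * x * e₂)
        rwa [hma, hadd, show D (0:P) = 0 from by
          have := hadd 0 0; simpa using this, add_zero] at h0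
      have h2 := h12 (a * (e₁ * x * e₂))
        ⟨x₀ * e₁ * x, by rw [ha]; simp only [mul_assoc, h11z]⟩
      rw [hDam] at h2
      simp only [mul_add, add_mul, mul_assoc, h11z, h12z, h21z, h22z, he1az, he2az,
        ha1z, ha2z, hae1, hae2, he1a, he2a, he, h12e, h21e, h22e,
        mul_zero, zero_mul, add_zero, zero_add] at h2 ⊢
      exact h2
    rcases hprime (e₁ * D a * e₁) e₂ key with h | h
    · exact h
    · exact absurd h he2ne
  -- Step 2 : e₁ * D a * e₂ = 0
  have step2 : e₁ * D a * e₂ = 0 := by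
    have key : ∀ x : P, e₂ * x * (e₁ * D a * e₂) = 0 := by
      intro x
      have h1 := congrArg (fun y => e₂ * y * e₂) (hlin a (e₂ * x * e₁))
      simp only [mul_add, add_mul, mul_assoc, h11z, h12z, h21z, h22z, he1az, he2az,
        ha1z, ha2z, hae1, hae2, he1a, he2a, he, h12e, h21e, h22e,
        mul_zero, zero_mul, add_zero, zero_add] at h1
      simp only [mul_assoc]
      exact h1.symm
    rcases hprime e₂ (e₁ * D a * e₂) key with h | h
    · exact absurd h he2ne
    · exact h
  -- Step 3 : e₂ * D a * e₁ = 0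
  have step3 : e₂ * D a * e₁ = 0 := by
    have key : ∀ x : P, (e₂ * D a * e₁) * x * e₂ = 0 := by
      intro x
      have h1 := congrArg (fun y => e₂ * y * e₂) (hlin a (e₁ * x * e₂))
      simp only [mul_add, add_mul, mul_assoc, h11z, h12z, h21z, h22z, he1az, he2az,
        ha1z, ha2z, hae1, hae2, he1a, he2a, he, h12e, h21e, h22e,
        mul_zero, zero_mul, add_zero, zero_add] at h1
      simp only [mul_assoc]
      exact h1
    rcases hprime (e₂ * D a * e₁) e₂ key with h | h
    · exact h
    · exact absurd h he2ne
  -- Step 4 : e₂ * D a * e₂ = 0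
  have step4 : e₂ * D a * e₂ = 0 := by
    have key : ∀ x : P, e₁ * x * (e₂ * D a * e₂) = 0 := by
      intro x
      have hm12 : e₁ * D (e₁ * (x * e₂)) * e₂ = 0 :=
        h12 (e₁ * (x * e₂)) ⟨x, (mul_assoc _ _ _).symm⟩
      have haDm : a * (D (e₁ * (x * e₂)) * e₂) = 0 := by
        conv_lhs => rw [← hae1]
        rw [mul_assoc, ← mul_assoc e₁ (D (e₁ * (x * e₂))) e₂, hm12, mul_zero]
      have s1z : ∀ z : P, e₁ * (D a * (e₁ * z)) = 0 := fun z => by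
        rw [← mul_assoc, ← mul_assoc, step1, zero_mul]
      have h1 := congrArg (fun y => e₁ * y * e₂) (hlin a (e₁ * x * e₂))
      simp only [mul_add, add_mul, mul_assoc, s1z, haDm, h11z, h12z, h21z, h22z,
        he1az, he2az, ha1z, ha2z, hae1, hae2, he1a, he2a, he, h12e, h21e, h22e,
        mul_zero, zero_mul, add_zero, zero_add] at h1
      simp only [mul_assoc]
      exact h1.symm
    rcases hprime e₁ (e₂ * D a * e₂) key with h | h
    · exact absurd h he0
    · exact h
  -- combine the four Peirce components
  have hfin : D a = e₁ * D a * e₁ + e₁ * D a * e₂ + e₂ * D a * e₁ + e₂ * D a * e₂ := by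
    rw [hE]; noncomm_ring
  rw [hfin, step1, step2, step3, step4]
  simp
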